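/- The modulo-DFT sensing model is identifiable on ℂ^N_𝒱 if and only if for every monic irreducible factor c of the polynomial X^N − 1 in ℚ(i)[X], there exists n ∈ 𝒱 such that c(exp(2πi·n/N)) = 0 (equivalently, with c₁,…,c_K the monic irreducible factors of X^N−1 over ℚ(i) and 𝒩_k = {n ∈ {0,…,N−1} : c_k(exp(2πi·n/N)) = 0}, one has 𝒩_k ∩ 𝒱 ≠ ∅ for every k ∈ {1,…,K}). -/

import Mathlib

open Polynomial IntermediateField

noncomputable def dft (N : ℕ) : Matrix (Fin N) (Fin N) ℂ :=
  Matrix.of fun n₁ n₂ : Fin N => (1 / Real.sqrt N : ℂ) *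
    Complex.exp (-(2 * Real.pi * Complex.I * (n₁ : ℕ) * (n₂ : ℕ)) / N)

/-- A complex number is a Gaussian integer if its real and imaginary parts are integers. -/
def IsGaussianInt (z : ℂ) : Prop := ∃ a b : ℤ, z = (a : ℂ) + (b : ℂ) * Complex.I

/-- Identifiability of the modulo-DFT sensing model on `ℂ^N_𝒱`: any two signals
supported off `𝒱` whose DFT images differ by a Gaussian integer vector coincide. -/
def ModuloDFTIdentifiable (N : ℕ) (V : Set ℕ) : Prop :=
  ∀ s s' : Fin N → ℂ,
    (∀ n : Fin N, (n : ℕ) ∈ V → s n = 0) →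
    (∀ n : Fin N, (n : ℕ) ∈ V → s' n = 0) →
    (∀ m : Fin N, IsGaussianInt ((dft N).mulVec s m - (dft N).mulVec s' m)) →
    s = s'

/-- the modulo-DFT sensing model is identifiable on ℂ^N_𝒱 iff every monic
irreducible factor of X^N − 1 over ℚ(i) has a root of the form e^{2πin/N} with n ∈ 𝒱. -/


noncomputable def om (N : ℕ) : ℂ := Complex.exp (2 * Real.pi * Complex.I / N)

lemma om_ne_zero (N : ℕ) : om N ≠ 0 := Complex.exp_ne_zero _

lemma exp_eq_om_pow (N : ℕ) (n : ℕ) :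
    Complex.exp (2 * Real.pi * Complex.I * n / N) = om N ^ n := by
  rw [show (2 * (Real.pi:ℂ) * Complex.I * n / N : ℂ)
      = n * (2 * (Real.pi:ℂ) * Complex.I / N) by ring]
  exact Complex.exp_nat_mul _ n

lemma dft_apply (N : ℕ) (n₁ n₂ : Fin N) :
    dft N n₁ n₂ = (1 / Real.sqrt N : ℂ) * (om N ^ ((n₁ : ℕ) * (n₂ : ℕ)))⁻¹ := by
  show (1 / Real.sqrt N : ℂ) * Complex.exp (-(2 * Real.pi * Complex.I * (n₁:ℕ) * (n₂:ℕ)) / N) = _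
  congr 1
  rw [show (-(2 * (Real.pi:ℂ) * Complex.I * (n₁:ℕ) * (n₂:ℕ)) / N : ℂ)
      = -(2 * (Real.pi:ℂ) * Complex.I * (((n₁:ℕ) * (n₂:ℕ) : ℕ) : ℂ) / N) by push_cast; ring]
  rw [Complex.exp_neg, exp_eq_om_pow]

lemma sum_orth {N : ℕ} (hN : 0 < N) (a b : Fin N) :
    ∑ m : Fin N, om N ^ ((m : ℕ) * (a : ℕ)) * (om N ^ ((m : ℕ) * (b : ℕ)))⁻¹
      = if a = b then (N : ℂ) else 0 := by
  have hprim := Complex.isPrimitiveRoot_exp N hN.ne'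
  have homN : om N ^ N = 1 := hprim.pow_eq_one
  set ζ : ℂ := om N ^ (a : ℕ) * (om N ^ (b : ℕ))⁻¹ with hζ
  have hterm : ∀ m : Fin N,
      om N ^ ((m : ℕ) * (a : ℕ)) * (om N ^ ((m : ℕ) * (b : ℕ)))⁻¹ = ζ ^ (m : ℕ) := by
    intro m
    rw [hζ, mul_pow, inv_pow, ← pow_mul, ← pow_mul, mul_comm (a:ℕ) (m:ℕ), mul_comm (b:ℕ) (m:ℕ)]
  rw [Finset.sum_congr rfl fun m _ => hterm m]
  rw [Fin.sum_univ_eq_sum_range (fun i => ζ ^ i) N]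
  by_cases hab : a = b
  · subst hab
    have : ζ = 1 := mul_inv_cancel₀ (pow_ne_zero _ (om_ne_zero N))
    simp [this]
  · have hne : ζ ≠ 1 := by
      intro h
      apply hab
      have hb0 : om N ^ (b : ℕ) ≠ 0 := pow_ne_zero _ (om_ne_zero N)
      have : om N ^ (a : ℕ) = om N ^ (b : ℕ) := by
        rw [hζ] at h
        exact (mul_inv_eq_one₀ hb0).mp h
      exact Fin.ext (hprim.pow_inj a.isLt b.isLt this)
    have hζN : ζ ^ N = 1 := by
      rw [hζ, mul_pow, inv_pow, ← pow_mul, ← pow_mul, mul_comm (a:ℕ) N, mul_comm (b:ℕ) N,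
        pow_mul, pow_mul, homN, one_pow, one_pow, inv_one, mul_one]
    rw [geom_sum_eq hne, hζN]
    simp [hab]

lemma sqrtN_ne_zero {N : ℕ} (hN : 0 < N) : ((Real.sqrt N : ℝ) : ℂ) ≠ 0 := by
  have : (0:ℝ) < Real.sqrt N := Real.sqrt_pos.mpr (by exact_mod_cast hN)
  exact_mod_cast this.ne'

lemma sqrt_mul_self' {N : ℕ} : ((Real.sqrt N : ℝ) : ℂ) * ((Real.sqrt N : ℝ) : ℂ) = (N : ℂ) := by
  have : Real.sqrt N * Real.sqrt N = (N : ℝ) := Real.mul_self_sqrt (Nat.cast_nonneg N)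
  exact_mod_cast congrArg (Complex.ofReal) this

lemma key1 {N : ℕ} (hN : 0 < N) (d : Fin N → ℂ) (n : Fin N) :
    ∑ m : Fin N, (dft N).mulVec d m * om N ^ ((m : ℕ) * (n : ℕ))
      = ((Real.sqrt N : ℝ) : ℂ) * d n := by
  have expand : ∀ m : Fin N, (dft N).mulVec d m * om N ^ ((m : ℕ) * (n : ℕ))
      = ∑ n' : Fin N, (1 / Real.sqrt N : ℂ) * d n'
          * (om N ^ ((m : ℕ) * (n : ℕ)) * (om N ^ ((m : ℕ) * (n' : ℕ)))⁻¹) := by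
    intro m
    rw [Matrix.mulVec, dotProduct, Finset.sum_mul]
    refine Finset.sum_congr rfl fun n' _ => ?_
    rw [dft_apply]
    ring
  rw [Finset.sum_congr rfl fun m _ => expand m, Finset.sum_comm]
  have inner : ∀ n' : Fin N,
      (∑ m : Fin N, (1 / Real.sqrt N : ℂ) * d n'
          * (om N ^ ((m : ℕ) * (n : ℕ)) * (om N ^ ((m : ℕ) * (n' : ℕ)))⁻¹))
      = (1 / Real.sqrt N : ℂ) * d n' * (if n = n' then (N:ℂ) else 0) := by
    intro n'
    rw [← Finset.mul_sum, sum_orth hN n n']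
  rw [Finset.sum_congr rfl fun n' _ => inner n']
  have : ∑ n' : Fin N, (1 / Real.sqrt N : ℂ) * d n' * (if n = n' then (N:ℂ) else 0)
      = (1 / Real.sqrt N : ℂ) * d n * (N : ℂ) := by
    rw [Finset.sum_eq_single n]
    · simp
    · intro b _ hb
      simp [Ne.symm hb]
    · intro hn; exact absurd (Finset.mem_univ n) hn
  rw [this, ← sqrt_mul_self' (N := N)]
  have h0 := sqrtN_ne_zero hN
  field_simp

lemma key2 {N : ℕ} (hN : 0 < N) (g : Fin N → ℂ) (m : Fin N) :
    (dft N).mulVec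
      (fun n => (1 / Real.sqrt N : ℂ) * ∑ m' : Fin N, g m' * om N ^ ((n : ℕ) * (m' : ℕ))) m
      = g m := by
  have expand : ∀ n : Fin N,
      dft N m n * ((1 / Real.sqrt N : ℂ) * ∑ m' : Fin N, g m' * om N ^ ((n : ℕ) * (m' : ℕ)))
      = ∑ m' : Fin N, (1 / Real.sqrt N : ℂ) * (1 / Real.sqrt N : ℂ) * g m'
          * (om N ^ ((n : ℕ) * (m' : ℕ)) * (om N ^ ((n : ℕ) * (m : ℕ)))⁻¹) := by
    intro n
    rw [dft_apply, Finset.mul_sum, Finset.mul_sum]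
    refine Finset.sum_congr rfl fun m' _ => ?_
    rw [mul_comm (m:ℕ) (n:ℕ)]
    ring
  show ∑ n : Fin N, dft N m n * _ = g m
  rw [Finset.sum_congr rfl fun n _ => expand n, Finset.sum_comm]
  have inner : ∀ m' : Fin N,
      (∑ n : Fin N, (1 / Real.sqrt N : ℂ) * (1 / Real.sqrt N : ℂ) * g m'
          * (om N ^ ((n : ℕ) * (m' : ℕ)) * (om N ^ ((n : ℕ) * (m : ℕ)))⁻¹))
      = (1 / Real.sqrt N : ℂ) * (1 / Real.sqrt N : ℂ) * g m' * (if m' = m then (N:ℂ) else 0) := by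
    intro m'
    rw [← Finset.mul_sum, sum_orth hN m' m]
  rw [Finset.sum_congr rfl fun m' _ => inner m']
  have : ∑ m' : Fin N, (1 / Real.sqrt N : ℂ) * (1 / Real.sqrt N : ℂ) * g m'
        * (if m' = m then (N:ℂ) else 0)
      = (1 / Real.sqrt N : ℂ) * (1 / Real.sqrt N : ℂ) * g m * (N : ℂ) := by
    rw [Finset.sum_eq_single m]
    · simp
    · intro b _ hb
      simp [hb]
    · intro hn; exact absurd (Finset.mem_univ m) hn
  rw [this, ← sqrt_mul_self' (N := N)]
  have h0 := sqrtN_ne_zero hN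
  field_simp


-- squarefree radical divisibility
lemma sq_dvd {F : Type*} [Field F] {q P : F[X]} (hq0 : q ≠ 0) (hsq : Squarefree q)
    (h : ∀ c : F[X], c.Monic → Irreducible c → c ∣ q → c ∣ P) : q ∣ P := by
  classical
  have hassoc := UniqueFactorizationMonoid.prod_normalizedFactors hq0
  have hnodup := (UniqueFactorizationMonoid.squarefree_iff_nodup_normalizedFactors hq0).mp hsq
  set M := UniqueFactorizationMonoid.normalizedFactors q with hM
  have hval : M.toFinset.val = M := by
    rw [Multiset.toFinset_val, Multiset.dedup_eq_self.mpr hnodup]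
  have hmem : ∀ x ∈ M.toFinset, x ∈ M := fun x hx => Multiset.mem_toFinset.mp hx
  have hdvdq : ∀ x ∈ M.toFinset, x ∣ q := fun x hx =>
    UniqueFactorizationMonoid.dvd_of_mem_normalizedFactors (hmem x hx)
  have hirr : ∀ x ∈ M.toFinset, Irreducible x := fun x hx =>
    UniqueFactorizationMonoid.irreducible_of_normalized_factor x (hmem x hx)
  have hnorm : ∀ x ∈ M.toFinset, normalize x = x := fun x hx =>
    UniqueFactorizationMonoid.normalize_normalized_factor x (hmem x hx)
  have hmonic : ∀ x ∈ M.toFinset, x.Monic := by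
    intro x hx
    have := Polynomial.monic_normalize (p := x) (hirr x hx).ne_zero
    rwa [hnorm x hx] at this
  have hprod : ∏ x ∈ M.toFinset, x = M.prod := by
    show M.toFinset.prod id = M.prod
    rw [← Finset.prod_val, hval]
  have hdvd : ∏ x ∈ M.toFinset, x ∣ P := by
    apply Finset.prod_dvd_of_coprime
    · intro a ha b hb hab
      have hia := hirr a ha
      have hib := hirr b hb
      rw [Function.onFun, Irreducible.coprime_iff_not_dvd hia]
      intro hdvd
      exact hab ((hia.associated_of_dvd hib hdvd).eq_of_normalized
        (hnorm a ha) (hnorm b hb))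
    · intro a ha
      exact h a (hmonic a ha) (hirr a ha) (hdvdq a ha)
  rw [hprod] at hdvd
  exact (hassoc.symm.dvd).trans hdvd

lemma I_integral : IsIntegral ℚ Complex.I := by
  refine ⟨X ^ 2 + 1, ?_, ?_⟩
  · apply Polynomial.monic_X_pow_add_C
    norm_num
  · simp [Complex.I_sq]

lemma mem_Qi {z : ℂ} (hz : z ∈ ℚ⟮Complex.I⟯) : ∃ a b : ℚ, z = a + b * Complex.I := by
  have h1 : (ℚ⟮Complex.I⟯).toSubalgebra = Algebra.adjoin ℚ {Complex.I} :=
    IntermediateField.adjoin_simple_toSubalgebra_of_isAlgebraic I_integral.isAlgebraic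
  have hz' : z ∈ Algebra.adjoin ℚ {Complex.I} := by
    rw [← h1]; exact hz
  refine Algebra.adjoin_induction ?_ ?_ ?_ ?_ hz'
  · rintro x rfl
    exact ⟨0, 1, by simp⟩
  · intro r
    exact ⟨r, 0, by simp⟩
  · rintro x y hx hy ⟨a, b, rfl⟩ ⟨c, d, rfl⟩
    exact ⟨a + c, b + d, by push_cast; ring⟩
  · rintro x y hx hy ⟨a, b, rfl⟩ ⟨c, d, rfl⟩
    refine ⟨a * c - b * d, a * d + b * c, ?_⟩
    push_cast
    linear_combination ((b : ℂ) * d) * Complex.I_sq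

lemma den_dvd_int {q : ℚ} {D : ℕ} (h : (q.den : ℕ) ∣ D) : ∃ k : ℤ, (D : ℚ) * q = k := by
  obtain ⟨t, ht⟩ := h
  refine ⟨q.num * t, ?_⟩
  have h0 : (q.den : ℚ) ≠ 0 := by exact_mod_cast q.den_ne_zero
  have hden : (q.den : ℚ) * q = q.num := by
    rw [mul_comm]
    exact ((div_eq_iff h0).mp (Rat.num_div_den q)).symm
  rw [ht]
  push_cast
  rw [mul_comm ((q.den : ℚ)) (t : ℚ), mul_assoc, hden]
  ring

theorem stmt1 (N : ℕ) (hN : 0 < N) (V : Set ℕ) (hV : ∀ n ∈ V, n < N) :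
    ModuloDFTIdentifiable N V ↔
      ∀ c : Polynomial ℚ⟮Complex.I⟯, c.Monic → Irreducible c → c ∣ (X ^ N - 1) →
        ∃ n ∈ V, Polynomial.aeval (Complex.exp (2 * Real.pi * Complex.I * n / N)) c = 0 := by
  classical
  haveI : CharZero ℚ⟮Complex.I⟯ :=
    charZero_of_injective_algebraMap (algebraMap ℚ ℚ⟮Complex.I⟯).injective
  have hq1 : (X ^ N - 1 : Polynomial ℚ⟮Complex.I⟯) = X ^ N - C 1 := by rw [map_one]
  have hq0 : (X ^ N - 1 : Polynomial ℚ⟮Complex.I⟯) ≠ 0 := by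
    rw [hq1]; exact X_pow_sub_C_ne_zero hN 1
  have hqdeg : (X ^ N - 1 : Polynomial ℚ⟮Complex.I⟯).degree = N := by
    rw [hq1]; exact degree_X_pow_sub_C hN 1
  have hqnat : (X ^ N - 1 : Polynomial ℚ⟮Complex.I⟯).natDegree = N := by
    rw [hq1]; exact natDegree_X_pow_sub_C
  have hqaeval : ∀ n : ℕ, aeval (om N ^ n) (X ^ N - 1 : Polynomial ℚ⟮Complex.I⟯) = 0 := by
    intro n
    have homN : om N ^ N = 1 := (Complex.isPrimitiveRoot_exp N hN.ne').pow_eq_one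
    rw [map_sub, map_one, map_pow, aeval_X, ← pow_mul, mul_comm n N, pow_mul, homN,
      one_pow, sub_self]
  constructor
  · -- identifiable → roots
    intro ident c hm hirr hcq
    by_contra hcon
    push_neg at hcon
    obtain ⟨p, hp⟩ := hcq
    have hc0 : c ≠ 0 := hirr.ne_zero
    have hp0 : p ≠ 0 := by
      rintro rfl
      rw [mul_zero] at hp
      exact hq0 hp
    have hcdeg : 0 < c.natDegree := hirr.natDegree_pos
    have hpdeg : p.natDegree < N := by
      have hmul := natDegree_mul hc0 hp0
      rw [← hp, hqnat] at hmul
      omega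
    have hcoefmem : ∀ m : ℕ, ∃ aq bq : ℚ,
        (algebraMap ℚ⟮Complex.I⟯ ℂ (p.coeff m)) = aq + bq * Complex.I :=
      fun m => mem_Qi (p.coeff m).2
    choose A B hAB using hcoefmem
    set D : ℕ := ∏ m ∈ Finset.range N, ((A m).den * (B m).den) with hD
    have hD0 : D ≠ 0 := by
      rw [hD]
      exact Finset.prod_ne_zero_iff.mpr fun m _ =>
        Nat.mul_ne_zero (A m).den_nz (B m).den_nz
    set z : Fin N → ℂ := fun m => (D : ℂ) * algebraMap ℚ⟮Complex.I⟯ ℂ (p.coeff (m : ℕ)) with hz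
    have hzG : ∀ m : Fin N, IsGaussianInt (z m) := by
      intro m
      have hmem : (m : ℕ) ∈ Finset.range N := Finset.mem_range.mpr m.isLt
      have hdA : ((A (m:ℕ)).den : ℕ) ∣ D :=
        dvd_trans ⟨(B (m:ℕ)).den, rfl⟩ (Finset.dvd_prod_of_mem _ hmem)
      have hdB : ((B (m:ℕ)).den : ℕ) ∣ D :=
        dvd_trans ⟨(A (m:ℕ)).den, mul_comm _ _⟩ (Finset.dvd_prod_of_mem _ hmem)
      obtain ⟨ka, hka⟩ := den_dvd_int hdA
      obtain ⟨kb, hkb⟩ := den_dvd_int hdB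
      refine ⟨ka, kb, ?_⟩
      have hka' : (D:ℂ) * ((A (m:ℕ) : ℚ):ℂ) = (ka:ℂ) := by exact_mod_cast congrArg (fun q : ℚ => (q:ℂ)) hka
      have hkb' : (D:ℂ) * ((B (m:ℕ) : ℚ):ℂ) = (kb:ℂ) := by exact_mod_cast congrArg (fun q : ℚ => (q:ℂ)) hkb
      show (D : ℂ) * algebraMap ℚ⟮Complex.I⟯ ℂ (p.coeff (m : ℕ)) = _
      rw [hAB (m:ℕ), mul_add, ← mul_assoc, hka', hkb']
    set s : Fin N → ℂ :=
      fun n => (1 / Real.sqrt N : ℂ) * ∑ m' : Fin N, z m' * om N ^ ((n:ℕ)*(m':ℕ)) with hsdef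
    have haev : ∀ n : Fin N, ∑ m' : Fin N, z m' * om N ^ ((n:ℕ)*(m':ℕ))
        = (D:ℂ) * aeval (om N ^ (n:ℕ)) p := by
      intro n
      rw [Polynomial.aeval_eq_sum_range' hpdeg, Finset.mul_sum]
      rw [show (∑ m' : Fin N, z m' * om N ^ ((n:ℕ)*(m':ℕ)))
          = ∑ i ∈ Finset.range N,
              ((D : ℂ) * algebraMap ℚ⟮Complex.I⟯ ℂ (p.coeff i) * om N ^ ((n:ℕ)*i)) from
        Fin.sum_univ_eq_sum_range
          (fun i => (D : ℂ) * algebraMap ℚ⟮Complex.I⟯ ℂ (p.coeff i) * om N ^ ((n:ℕ)*i)) N]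
      refine Finset.sum_congr rfl fun i _ => ?_
      rw [Algebra.smul_def, ← pow_mul]
      ring
    have hsV : ∀ n : Fin N, (n:ℕ) ∈ V → s n = 0 := by
      intro n hn
      have hcne : aeval (om N ^ (n:ℕ)) c ≠ 0 := by
        have h1 := hcon (n:ℕ) hn
        rwa [exp_eq_om_pow] at h1
      have h2 := hqaeval (n:ℕ)
      rw [hp, map_mul] at h2
      have hpv : aeval (om N ^ (n:ℕ)) p = 0 := by
        rcases mul_eq_zero.mp h2 with h | h
        · exact absurd h hcne
        · exact h
      show (1 / Real.sqrt N : ℂ) * ∑ m' : Fin N, z m' * om N ^ ((n:ℕ)*(m':ℕ)) = 0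
      rw [haev n, hpv, mul_zero, mul_zero]
    have hGs : ∀ m : Fin N,
        IsGaussianInt ((dft N).mulVec s m - (dft N).mulVec (0 : Fin N → ℂ) m) := by
      intro m
      rw [Matrix.mulVec_zero]
      have hk := key2 hN z m
      rw [← hsdef] at hk
      simpa [hk] using hzG m
    have hid := ident s 0 hsV (fun n _ => rfl) hGs
    have hex : ∃ n : Fin N, aeval (om N ^ (n:ℕ)) p ≠ 0 := by
      by_contra hall
      push_neg at hall
      set pc := p.map (algebraMap ℚ⟮Complex.I⟯ ℂ) with hpc
      have hpc0 : pc ≠ 0 :=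
        (Polynomial.map_ne_zero_iff (algebraMap ℚ⟮Complex.I⟯ ℂ).injective).mpr hp0
      have hsub : Finset.image (fun n : Fin N => om N ^ (n:ℕ)) Finset.univ ⊆ pc.roots.toFinset := by
        intro x hx
        obtain ⟨n, _, rfl⟩ := Finset.mem_image.mp hx
        rw [Multiset.mem_toFinset, mem_roots hpc0]
        show pc.IsRoot _
        rw [IsRoot, hpc, eval_map, ← aeval_def]
        exact hall n
      have hinj : Function.Injective (fun n : Fin N => om N ^ (n:ℕ)) := by
        intro i j h
        exact Fin.ext ((Complex.isPrimitiveRoot_exp N hN.ne').pow_inj i.isLt j.isLt h)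
      have hcard := Finset.card_le_card hsub
      rw [Finset.card_image_of_injective _ hinj, Finset.card_univ, Fintype.card_fin] at hcard
      have h2 : pc.roots.toFinset.card ≤ Multiset.card pc.roots := Multiset.toFinset_card_le _
      have h3 : Multiset.card pc.roots ≤ pc.natDegree := pc.card_roots'
      have h4 : pc.natDegree = p.natDegree := natDegree_map _
      omega
    obtain ⟨n, hpn⟩ := hex
    have hsn : s n ≠ 0 := by
      have hrw : s n = (1 / Real.sqrt N : ℂ) * ((D:ℂ) * aeval (om N ^ (n:ℕ)) p) := by
        show (1 / Real.sqrt N : ℂ) * ∑ m' : Fin N, z m' * om N ^ ((n:ℕ)*(m':ℕ)) = _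
        rw [haev n]
      rw [hrw]
      apply mul_ne_zero
      · exact one_div_ne_zero (sqrtN_ne_zero hN)
      · exact mul_ne_zero (by exact_mod_cast hD0) hpn
    rw [hid] at hsn
    exact hsn rfl
  · -- roots → identifiable
    intro hroots s s' hs hs' hG
    have hd : ∀ m : Fin N, IsGaussianInt ((dft N).mulVec (s - s') m) := by
      intro m
      rw [Matrix.mulVec_sub]
      exact hG m
    choose a b hab using hd
    have hIK : Complex.I ∈ ℚ⟮Complex.I⟯ := IntermediateField.mem_adjoin_simple_self ℚ Complex.I
    set G : Fin N → ℚ⟮Complex.I⟯ :=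
      fun m => (a m : ℚ⟮Complex.I⟯) + (b m : ℚ⟮Complex.I⟯) * ⟨Complex.I, hIK⟩ with hGdef
    have hGcoe : ∀ m : Fin N, (algebraMap ℚ⟮Complex.I⟯ ℂ) (G m) = (dft N).mulVec (s - s') m := by
      intro m
      rw [hab m]
      show (algebraMap ℚ⟮Complex.I⟯ ℂ)
        ((a m : ℚ⟮Complex.I⟯) + (b m : ℚ⟮Complex.I⟯) * ⟨Complex.I, hIK⟩) = _
      rw [map_add, map_mul, map_intCast, map_intCast]
      rfl
    set P : Polynomial ℚ⟮Complex.I⟯ := ∑ m : Fin N, C (G m) * X ^ (m : ℕ) with hP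
    have hPaeval : ∀ w : ℂ, aeval w P = ∑ m : Fin N, (dft N).mulVec (s - s') m * w ^ (m:ℕ) := by
      intro w
      rw [hP, map_sum]
      refine Finset.sum_congr rfl fun m _ => ?_
      rw [map_mul, aeval_C, map_pow, aeval_X, hGcoe m]
    have hconv : ∀ n : Fin N,
        ∑ m : Fin N, (dft N).mulVec (s - s') m * (om N ^ (n:ℕ)) ^ (m:ℕ)
          = ∑ m : Fin N, (dft N).mulVec (s - s') m * om N ^ ((m:ℕ) * (n:ℕ)) := by
      intro n
      refine Finset.sum_congr rfl fun m _ => ?_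
      rw [← pow_mul, mul_comm (n:ℕ) (m:ℕ)]
    have hPdeg : P.degree < ((X ^ N - 1 : Polynomial ℚ⟮Complex.I⟯)).degree := by
      rw [hqdeg, hP]
      refine lt_of_le_of_lt (degree_sum_le _ _) ?_
      rw [Finset.sup_lt_iff (by exact_mod_cast WithBot.bot_lt_coe N)]
      intro m _
      refine lt_of_le_of_lt (degree_mul_le _ _) ?_
      refine lt_of_le_of_lt (add_le_add degree_C_le (le_of_eq (degree_X_pow _))) ?_
      rw [zero_add]
      exact_mod_cast (WithBot.coe_lt_coe).mpr m.isLt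
    have hvan : ∀ n : Fin N, (n:ℕ) ∈ V → aeval (om N ^ (n:ℕ)) P = 0 := by
      intro n hn
      rw [hPaeval, hconv n, key1 hN]
      have hdn : (s - s') n = 0 := by
        rw [Pi.sub_apply, hs n hn, hs' n hn, sub_zero]
      rw [hdn, mul_zero]
    have hsqf : Squarefree (X ^ N - 1 : Polynomial ℚ⟮Complex.I⟯) := by
      rw [hq1]
      exact (Polynomial.separable_X_pow_sub_C (1 : ℚ⟮Complex.I⟯)
        (by exact_mod_cast hN.ne') one_ne_zero).squarefree
    have hdvd : (X ^ N - 1 : Polynomial ℚ⟮Complex.I⟯) ∣ P := by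
      apply sq_dvd hq0 hsqf
      intro c hcm hcirr hcq
      obtain ⟨n, hnV, hc0⟩ := hroots c hcm hcirr hcq
      have hnN : n < N := hV n hnV
      rw [exp_eq_om_pow] at hc0
      rw [minpoly.eq_of_irreducible_of_monic hcirr hc0 hcm]
      apply minpoly.dvd
      have := hvan ⟨n, hnN⟩ hnV
      simpa using this
    have hP0 : P = 0 := eq_zero_of_dvd_of_degree_lt hdvd hPdeg
    have hzero : ∀ n : Fin N, (s - s') n = 0 := by
      intro n
      have h1 := key1 hN (s - s') n
      have h2 := hPaeval (om N ^ (n:ℕ))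
      rw [hP0, map_zero, hconv n] at h2
      rw [← h2] at h1
      have := h1.symm
      rcases mul_eq_zero.mp this with h | h
      · exact absurd h (sqrtN_ne_zero hN)
      · exact h
    funext n
    have := hzero n
    rwa [Pi.sub_apply, sub_eq_zero] at this
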